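/- Let f : ℝⁿ → ℝᵐ be twice continuously differentiable, let y ∈ ℝᵐ, and let θ* ∈ ℝⁿ. Suppose that for all v ∈ ℝⁿ one has D²E(θ*)(v, v) − ‖Df(θ*)v‖² ≥ 0 (i.e. S = ∇²E(θ*) − J(θ*)ᵀJ(θ*) is positive semidefinite). Then for every α ≥ 0 and every v ∈ ℝⁿ, D²E_α(θ*)(v, v) ≥ 0; that is, the Hessian of the α-expanded objective at θ* is positive semidefinite for all α ≥ 0. -/

import Mathlib

open scoped RealInnerProductSpace

/-- The least-squares objective `E(θ) = ½‖y − f(θ)‖²`. -/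
noncomputable def lsE {n m : ℕ} (f : EuclideanSpace ℝ (Fin n) → EuclideanSpace ℝ (Fin m))
    (y : EuclideanSpace ℝ (Fin m)) (θ : EuclideanSpace ℝ (Fin n)) : ℝ :=
  (1 / 2) * ‖y - f θ‖ ^ 2

/-- The `α`-expanded objective at the point `θs`:
`E_α(θ) = ½‖ŷ − f(θ)‖²` with `ŷ = y + α • (y − f(θs))`. -/
noncomputable def lsEexp {n m : ℕ} (f : EuclideanSpace ℝ (Fin n) → EuclideanSpace ℝ (Fin m))
    (y : EuclideanSpace ℝ (Fin m)) (θs : EuclideanSpace ℝ (Fin n)) (α : ℝ)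
    (θ : EuclideanSpace ℝ (Fin n)) : ℝ :=
  (1 / 2) * ‖(y + α • (y - f θs)) - f θ‖ ^ 2

lemma fderiv_half_normsq (f : EuclideanSpace ℝ (Fin n) → EuclideanSpace ℝ (Fin m))
    (hf : ContDiff ℝ 2 f) (c : EuclideanSpace ℝ (Fin m)) :
    fderiv ℝ (fun θ => (1 / 2 : ℝ) * ‖c - f θ‖ ^ 2)
      = fun θ => ((innerSL ℝ (f θ - c)).comp (fderiv ℝ f θ)) := by
  funext θ
  have hd : HasFDerivAt f (fderiv ℝ f θ) θ :=
    (hf.differentiable (by norm_num)).differentiableAt.hasFDerivAt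
  have hg : HasFDerivAt (fun θ => c - f θ) (-(fderiv ℝ f θ)) θ := by
    exact hd.const_sub c
  have h1 : HasFDerivAt (fun θ => (1 / 2 : ℝ) * ‖c - f θ‖ ^ 2)
      ((1/2 : ℝ) • ((fderivInnerCLM ℝ (c - f θ, c - f θ)).comp
        ((-(fderiv ℝ f θ)).prod (-(fderiv ℝ f θ))))) θ := by
    have := (hg.inner ℝ hg).const_mul (1/2 : ℝ)
    simp only [real_inner_self_eq_norm_sq] at this
    simpa [smul_eq_mul] using this
  rw [h1.fderiv]
  ext w
  simp only [ContinuousLinearMap.coe_smul', Pi.smul_apply, ContinuousLinearMap.coe_comp',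
    Function.comp_apply, ContinuousLinearMap.prod_apply, fderivInnerCLM_apply,
    ContinuousLinearMap.neg_apply, innerSL_apply_apply, smul_eq_mul]
  simp only [inner_neg_left, inner_neg_right, inner_sub_left, inner_sub_right]
  rw [real_inner_comm ((fderiv ℝ f θ) w) c, real_inner_comm ((fderiv ℝ f θ) w) (f θ)]
  ring

lemma hess_lsE (f : EuclideanSpace ℝ (Fin n) → EuclideanSpace ℝ (Fin m))
    (hf : ContDiff ℝ 2 f) (c : EuclideanSpace ℝ (Fin m)) (θs : EuclideanSpace ℝ (Fin n))
    (v : EuclideanSpace ℝ (Fin n)) :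
    fderiv ℝ (fderiv ℝ (fun θ => (1 / 2 : ℝ) * ‖c - f θ‖ ^ 2)) θs v v
      = ‖fderiv ℝ f θs v‖ ^ 2 + ⟪f θs - c, fderiv ℝ (fderiv ℝ f) θs v v⟫ := by
  rw [fderiv_half_normsq f hf c]
  have hd : HasFDerivAt f (fderiv ℝ f θs) θs :=
    (hf.differentiable (by norm_num)).differentiableAt.hasFDerivAt
  have hdf : HasFDerivAt (fderiv ℝ f) (fderiv ℝ (fderiv ℝ f) θs) θs := by
    have : ContDiff ℝ 1 (fderiv ℝ f) := hf.fderiv_right (by norm_num)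
    exact (this.differentiable one_ne_zero).differentiableAt.hasFDerivAt
  have hc : HasFDerivAt (fun θ => innerSL ℝ (f θ - c))
      (((innerSL ℝ : EuclideanSpace ℝ (Fin m) →L[ℝ] EuclideanSpace ℝ (Fin m) →L[ℝ] ℝ)).comp (fderiv ℝ f θs)) θs := by
    have h2 : HasFDerivAt (fun θ => f θ - c) (fderiv ℝ f θs) θs := hd.sub_const c
    exact (ContinuousLinearMap.hasFDerivAt _).comp θs h2
  have H := hc.clm_comp hdf
  rw [H.fderiv]
  simp only [ContinuousLinearMap.add_apply, ContinuousLinearMap.coe_comp', Function.comp_apply,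
    ContinuousLinearMap.compL_apply, ContinuousLinearMap.flip_apply, innerSL_apply_apply,
    ContinuousLinearMap.comp_apply]
  rw [real_inner_self_eq_norm_sq]
  ring

theorem stmt_4 {n m : ℕ} (f : EuclideanSpace ℝ (Fin n) → EuclideanSpace ℝ (Fin m))
    (y : EuclideanSpace ℝ (Fin m)) (θs : EuclideanSpace ℝ (Fin n))
    (hf : ContDiff ℝ 2 f)
    (hS : ∀ v : EuclideanSpace ℝ (Fin n),
      0 ≤ fderiv ℝ (fderiv ℝ (lsE f y)) θs v v - ‖fderiv ℝ f θs v‖ ^ 2) :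
    ∀ α : ℝ, 0 ≤ α → ∀ v : EuclideanSpace ℝ (Fin n),
      0 ≤ fderiv ℝ (fderiv ℝ (lsEexp f y θs α)) θs v v := by
  intro α hα v
  have hs := hS v
  have h1 := hess_lsE f hf y θs v
  have h2 := hess_lsE f hf (y + α • (y - f θs)) θs v
  unfold lsE at hs
  rw [h1] at hs
  unfold lsEexp
  rw [h2]
  have he : f θs - (y + α • (y - f θs)) = (1 + α) • (f θs - y) := by module
  rw [he, real_inner_smul_left]
  nlinarith [sq_nonneg ‖fderiv ℝ f θs v‖]
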